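/- Every Arf numerical semigroup is acute. -/

import Mathlib

structure NumericalSemigroup where
  carrier : Set ℕ
  zero_mem : 0 ∈ carrier
  add_mem : ∀ {a b : ℕ}, a ∈ carrier → b ∈ carrier → a + b ∈ carrier
  finite_compl : Set.Finite carrierᶜ

namespace NumericalSemigroup

/-- The genus: the number of gaps. -/
noncomputable def genus (Λ : NumericalSemigroup) : ℕ := Λ.carrierᶜ.ncard

/-- The conductor: the smallest `c` with `c + ℕ ⊆ Λ`. -/
noncomputable def conductor (Λ : NumericalSemigroup) : ℕ := sInf {c : ℕ | ∀ n, c ≤ n → n ∈ Λ.carrier}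

/-- `f` is the (unique) increasing enumeration of `Λ`. -/
noncomputable def IsEnum (Λ : NumericalSemigroup) (f : ℕ → ℕ) : Prop :=
  StrictMono f ∧ Set.range f = Λ.carrier

/-- The Arf property: `λ_i + λ_j - λ_k ∈ Λ` for all `i ≥ j ≥ k`. -/
noncomputable def IsArf (Λ : NumericalSemigroup) : Prop :=
  ∀ f : ℕ → ℕ, Λ.IsEnum f → ∀ i j k : ℕ, k ≤ j → j ≤ i → f i + f j - f k ∈ Λ.carrier

end NumericalSemigroup

namespace NumericalSemigroup

/-- A numerical semigroup is ordinary if it is `{0} ∪ [c, ∞)` for some `c`. -/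
noncomputable def IsOrdinary (Λ : NumericalSemigroup) : Prop :=
  ∃ c : ℕ, Λ.carrier = insert 0 (Set.Ici c)

/-- The dominant: the largest element of `Λ` smaller than the conductor. -/
noncomputable def dominant (Λ : NumericalSemigroup) : ℕ :=
  sSup {n : ℕ | n ∈ Λ.carrier ∧ n < Λ.conductor}

/-- The subconductor: the smallest element `m` of `Λ` with `[m, d] ⊆ Λ`. -/
noncomputable def subconductor (Λ : NumericalSemigroup) : ℕ :=
  sInf {m : ℕ | m ∈ Λ.carrier ∧ Set.Icc m Λ.dominant ⊆ Λ.carrier}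

/-- The subdominant: the largest element of `Λ` smaller than the subconductor. -/
noncomputable def subdominant (Λ : NumericalSemigroup) : ℕ :=
  sSup {n : ℕ | n ∈ Λ.carrier ∧ n < Λ.subconductor}

/-- Acute: ordinary, or `c - d ≤ c' - d'`. -/
noncomputable def IsAcute (Λ : NumericalSemigroup) : Prop :=
  Λ.IsOrdinary ∨ Λ.conductor - Λ.dominant ≤ Λ.subconductor - Λ.subdominant

end NumericalSemigroup

section Aux

open Set

lemma arf_closed (Λ : NumericalSemigroup) (hArf : Λ.IsArf) :
    ∀ x y z : ℕ, x ∈ Λ.carrier → y ∈ Λ.carrier → z ∈ Λ.carrier →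
      z ≤ y → y ≤ x → x + y - z ∈ Λ.carrier := by
  classical
  intro x y z hx hy hz hzy hyx
  set p : ℕ → Prop := fun n => n ∈ Λ.carrier with hp
  have hinf : (setOf p).Infinite := by
    have : (Λ.carrierᶜ)ᶜ.Infinite := Λ.finite_compl.infinite_compl
    rw [compl_compl] at this; exact this
  have henum : Λ.IsEnum (Nat.nth p) :=
    ⟨Nat.nth_strictMono hinf, Nat.range_nth_of_infinite hinf⟩
  have h := hArf (Nat.nth p) henum (Nat.count p x) (Nat.count p y) (Nat.count p z)
    (Nat.count_monotone p hzy) (Nat.count_monotone p hyx)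
  rwa [Nat.nth_count hx, Nat.nth_count hy, Nat.nth_count hz] at h

end Aux

theorem stmt12 (Λ : NumericalSemigroup) (hArf : Λ.IsArf) :
    Λ.IsAcute := by
  classical
  by_cases hord : Λ.IsOrdinary
  · exact Or.inl hord
  right
  set c := Λ.conductor with hc
  -- conductor set is nonempty
  obtain ⟨b, hb⟩ := Λ.finite_compl.bddAbove
  have hCne : {m : ℕ | ∀ n, m ≤ n → n ∈ Λ.carrier}.Nonempty := by
    refine ⟨b + 1, fun n hn => ?_⟩
    by_contra hcon
    exact absurd (hb hcon) (by omega)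
  have hcond : ∀ n, c ≤ n → n ∈ Λ.carrier := Nat.sInf_mem hCne
  -- c ≥ 1
  have hc1 : 1 ≤ c := by
    by_contra h
    have hc0 : c = 0 := by omega
    refine hord ⟨0, ?_⟩
    ext x
    simp only [Set.mem_insert_iff, Set.mem_Ici]
    exact ⟨fun _ => Or.inr (Nat.zero_le _), fun _ => hcond x (by omega)⟩
  -- dominant
  set d := Λ.dominant with hd
  have hDne : {n : ℕ | n ∈ Λ.carrier ∧ n < c}.Nonempty := ⟨0, Λ.zero_mem, by omega⟩
  have hDbdd : BddAbove {n : ℕ | n ∈ Λ.carrier ∧ n < c} :=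
    ⟨c, fun x hx => le_of_lt hx.2⟩
  have hdmem : d ∈ Λ.carrier ∧ d < c := Nat.sSup_mem hDne hDbdd
  have hdmax : ∀ x, x ∈ Λ.carrier → x < c → x ≤ d := fun x hx hxc =>
    le_csSup hDbdd ⟨hx, hxc⟩
  -- d ≥ 1
  have hd1 : 1 ≤ d := by
    by_contra h
    have hd0 : d = 0 := by omega
    refine hord ⟨c, ?_⟩
    ext x
    simp only [Set.mem_insert_iff, Set.mem_Ici]
    constructor
    · intro hx
      by_cases hxc : c ≤ x
      · exact Or.inr hxc
      · exact Or.inl (by have := hdmax x hx (by omega); omega)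
    · rintro (rfl | hx)
      · exact Λ.zero_mem
      · exact hcond x hx
  -- subconductor
  set c' := Λ.subconductor with hc'
  have hSne : {m : ℕ | m ∈ Λ.carrier ∧ Set.Icc m d ⊆ Λ.carrier}.Nonempty := by
    refine ⟨d, hdmem.1, fun x hx => ?_⟩
    have : x = d := le_antisymm hx.2 hx.1
    exact this ▸ hdmem.1
  have hsc : c' ∈ Λ.carrier ∧ Set.Icc c' d ⊆ Λ.carrier := Nat.sInf_mem hSne
  have hc'd : c' ≤ d := by
    have := Nat.sInf_le hSne.choose_spec
    exact Nat.sInf_le (by exact ⟨hdmem.1, fun x hx => le_antisymm hx.2 hx.1 ▸ hdmem.1⟩)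
  -- c' ≥ 1
  have hc'1 : 1 ≤ c' := by
    by_contra h
    have hc'0 : c' = 0 := by omega
    have h1 : (1 : ℕ) ∈ Λ.carrier := hsc.2 ⟨by omega, by omega⟩
    have hall : ∀ n : ℕ, n ∈ Λ.carrier := by
      intro n
      induction n with
      | zero => exact Λ.zero_mem
      | succ k ih => exact Λ.add_mem ih h1
    have : c ≤ 0 := Nat.sInf_le (fun n _ => hall n)
    omega
  -- subdominant
  set d' := Λ.subdominant with hd'
  have hD'ne : {n : ℕ | n ∈ Λ.carrier ∧ n < c'}.Nonempty := ⟨0, Λ.zero_mem, by omega⟩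
  have hD'bdd : BddAbove {n : ℕ | n ∈ Λ.carrier ∧ n < c'} :=
    ⟨c', fun x hx => le_of_lt hx.2⟩
  have hd'mem : d' ∈ Λ.carrier ∧ d' < c' := Nat.sSup_mem hD'ne hD'bdd
  -- key element
  have hkey : d + c' - d' ∈ Λ.carrier :=
    arf_closed Λ hArf d c' d' hdmem.1 hsc.1 hd'mem.1 (le_of_lt hd'mem.2) hc'd
  have hgt : d < d + c' - d' := by omega
  have hge : c ≤ d + c' - d' := by
    by_contra h
    have := hdmax _ hkey (by omega)
    omega
  omega
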